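/- arXiv:2010.05000 — 6 statements merged into one kernel-verified Lean document; each statement's English description precedes it below -/
import Mathlib

section
/- In the commuting graph Δ(B_n) (n ≥ 2), every idempotent vertex (i,i) has degree (n−1)², and every non-idempotent vertex (i,j) with i ≠ j has degree n(n−2). -/
/-- Multiplication of nonzero elements of the Brandt semigroup `B_n`:
`(i,j)·(k,l) = (i,l)` if `j = k`, and `0` (here `none`) otherwise. -/
def brandtMul {n : ℕ} (x y : Fin n × Fin n) : Option (Fin n × Fin n) :=
  if x.2 = y.1 then some (x.1, y.2) else none

/-- The commuting graph of the Brandt semigroup `B_n`. -/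
def brandtGraph (n : ℕ) : SimpleGraph (Fin n × Fin n) where
  Adj x y := x ≠ y ∧ brandtMul x y = brandtMul y x
  symm := by constructor; intro x y h; exact ⟨h.1.symm, h.2.symm⟩
  loopless := by constructor; intro x h; exact h.1 rfl

instance {n : ℕ} : DecidableRel (brandtGraph n).Adj :=
  fun x y => decidable_of_iff (x ≠ y ∧ brandtMul x y = brandtMul y x) Iff.rfl

open Finset

lemma adj_iff {n : ℕ} (i j k l : Fin n) :
    (brandtGraph n).Adj (i, j) (k, l) ↔
      (i, j) ≠ (k, l) ∧ (if j = k then some ((i, l) : Fin n × Fin n) else none)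
        = (if l = i then some ((k, j) : Fin n × Fin n) else none) := by
  rfl

lemma nbr_idem {n : ℕ} (i : Fin n) :
    (brandtGraph n).neighborFinset (i, i) =
      univ.filter (fun x : Fin n × Fin n => x.1 ≠ i ∧ x.2 ≠ i) := by
  ext ⟨k, l⟩
  simp only [SimpleGraph.mem_neighborFinset, mem_filter, mem_univ, true_and]
  rw [adj_iff]
  constructor
  · rintro ⟨hne, h⟩
    rcases eq_or_ne i k with h1 | h1
    · rcases eq_or_ne l i with h2 | h2
      · exact absurd (Prod.ext h1 h2.symm) hne
      · rw [if_pos h1, if_neg h2] at h; simp at h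
    · refine ⟨fun e => h1 e.symm, ?_⟩
      rcases eq_or_ne l i with h2 | h2
      · rw [if_neg h1, if_pos h2] at h; simp at h
      · exact h2
  · rintro ⟨hk, hl⟩
    refine ⟨fun h => hk (congrArg Prod.fst h).symm, ?_⟩
    rw [if_neg (fun h => hk h.symm), if_neg hl]

lemma card_ne {n : ℕ} (i : Fin n) :
    (univ.filter (fun x : Fin n => x ≠ i)).card = n - 1 := by
  rw [Finset.filter_ne', Finset.card_erase_of_mem (mem_univ i), Finset.card_univ,
    Fintype.card_fin]

lemma card_filter_pair {n : ℕ} (a b : Fin n) :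
    (univ.filter (fun x : Fin n × Fin n => x.1 ≠ a ∧ x.2 ≠ b)).card = (n-1) * (n-1) := by
  have h : (univ.filter (fun x : Fin n × Fin n => x.1 ≠ a ∧ x.2 ≠ b))
      = (univ.filter (· ≠ a)) ×ˢ (univ.filter (· ≠ b)) := by
    ext ⟨k, l⟩; simp
  rw [h, Finset.card_product, card_ne, card_ne]

lemma nbr_nonidem {n : ℕ} (i j : Fin n) (hij : i ≠ j) :
    (brandtGraph n).neighborFinset (i, j) =
      (univ.filter (fun x : Fin n × Fin n => x.1 ≠ j ∧ x.2 ≠ i)).erase (i, j) := by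
  ext ⟨k, l⟩
  simp only [SimpleGraph.mem_neighborFinset, mem_filter, mem_univ, true_and, Finset.mem_erase]
  rw [adj_iff]
  constructor
  · rintro ⟨hne, h⟩
    rcases eq_or_ne j k with h1 | h1
    · rcases eq_or_ne l i with h2 | h2
      · rw [if_pos h1, if_pos h2] at h
        simp only [Option.some.injEq, Prod.mk.injEq] at h
        exact absurd (h.1.trans h1.symm) hij
      · rw [if_pos h1, if_neg h2] at h; simp at h
    · rcases eq_or_ne l i with h2 | h2
      · rw [if_neg h1, if_pos h2] at h; simp at h
      · exact ⟨fun e => hne e.symm, fun e => h1 e.symm, h2⟩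
  · rintro ⟨hne, hk, hl⟩
    refine ⟨fun h => hne h.symm, ?_⟩
    rw [if_neg (fun h => hk h.symm), if_neg hl]

theorem brandt_degree (n : ℕ) (hn : 2 ≤ n) :
    (∀ i : Fin n, (brandtGraph n).degree (i, i) = (n - 1) ^ 2) ∧
    (∀ i j : Fin n, i ≠ j → (brandtGraph n).degree (i, j) = n * (n - 2)) := by
  constructor
  · intro i
    rw [SimpleGraph.degree, nbr_idem, card_filter_pair, sq]
  · intro i j hij
    rw [SimpleGraph.degree, nbr_nonidem i j hij,
      Finset.card_erase_of_mem (by simp [hij, hij.symm, Ne.symm]), card_filter_pair]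
    obtain ⟨m, rfl⟩ : ∃ m, n = m + 2 := ⟨n - 2, by omega⟩
    have h1 : m + 2 - 1 = m + 1 := rfl
    have h2 : m + 2 - 2 = m := rfl
    rw [h1, h2]
    have : (m + 1) * (m + 1) = (m + 2) * m + 1 := by ring
    omega
end

section
/- For n ≥ 3, the commuting graph Δ(B_n) is Hamiltonian: it contains a cycle passing through all n² vertices. -/
/-! ### Auxiliary walk-from-sequence machinery -/

namespace BrandtHam

open SimpleGraph

variable {V : Type*} {G : SimpleGraph V}

/-- Build a walk along a sequence of pairwise adjacent vertices. -/
def chainWalk (v : ℕ → V) (h : ∀ k, G.Adj (v k) (v (k+1))) :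
    ∀ (m k : ℕ), G.Walk (v k) (v (k+m))
  | 0, _ => Walk.nil
  | m+1, k => Walk.cons (h k) ((chainWalk v h m (k+1)).copy rfl (congrArg v (by omega)))

lemma chainWalk_support (v : ℕ → V) (h : ∀ k, G.Adj (v k) (v (k+1))) :
    ∀ (m k : ℕ), (chainWalk v h m k).support
      = (List.range (m+1)).map (fun i => v (k+i))
  | 0, k => by simp [chainWalk, List.range_succ]
  | m+1, k => by
    rw [chainWalk]
    rw [Walk.support_cons, Walk.support_copy, chainWalk_support v h m (k+1)]
    rw [List.range_succ_eq_map (n := m+1), List.map_cons, List.map_map]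
    rw [Nat.add_zero]
    congr 1
    refine List.map_congr_left fun i _ => ?_
    show v (k+1+i) = v (k + (i+1))
    congr 1; omega

lemma chainWalk_edges (v : ℕ → V) (h : ∀ k, G.Adj (v k) (v (k+1))) :
    ∀ (m k : ℕ), (chainWalk v h m k).edges
      = (List.range m).map (fun i => s(v (k+i), v (k+i+1)))
  | 0, k => by simp [chainWalk, List.range_zero]
  | m+1, k => by
    rw [chainWalk]
    rw [Walk.edges_cons, Walk.edges_copy, chainWalk_edges v h m (k+1)]
    rw [List.range_succ_eq_map (n := m), List.map_cons, List.map_map]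
    rw [show k + 0 + 1 = k + 1 from by omega, Nat.add_zero]
    congr 1
    refine List.map_congr_left fun i _ => ?_
    show s(v (k+1+i), v (k+1+i+1)) = s(v (k+(i+1)), v (k+(i+1)+1))
    rw [show k+1+i = k+(i+1) from by omega]

/-! ### The explicit Hamiltonian cycle -/

variable (n : ℕ)

/-- Natural number reduced mod `n`, as an element of `Fin n`. -/
def gfin (hn : 3 ≤ n) (k : ℕ) : Fin n := ⟨k % n, Nat.mod_lt _ (by omega)⟩

lemma gfin_eq_iff (hn : 3 ≤ n) {a b : ℕ} :
    gfin n hn a = gfin n hn b ↔ a % n = b % n := by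
  simp [gfin, Fin.ext_iff]

lemma nat_mod_ne (hn : 3 ≤ n) {a b : ℕ} (hab : a < b) (h : b < a + n) :
    b % n ≠ a % n := by
  intro h'
  have hd : n ∣ b - a := (Nat.modEq_iff_dvd' hab.le).mp h'.symm
  have := Nat.le_of_dvd (by omega) hd
  omega

lemma gfin_ne (hn : 3 ≤ n) {a b : ℕ} (hab : a < b) (h : b < a + n) :
    gfin n hn a ≠ gfin n hn b := by
  rw [Ne, gfin_eq_iff]
  exact fun h' => nat_mod_ne n hn hab h h'.symm

lemma nat_mod_inj (hn : 3 ≤ n) {a b : ℕ} (h : a % n = b % n)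
    (h2 : a < b + n) (h3 : b < a + n) : a = b := by
  rcases Nat.lt_trichotomy a b with hlt | heq | hgt
  · exact absurd h.symm (nat_mod_ne n hn hlt h3)
  · exact heq
  · exact absurd h (nat_mod_ne n hn hgt h2)

/-- The Hamiltonian cycle: block `r` (indices `k` with `k / n = r`) consists of the
diagonal vertex `(r+1, r+1)` followed by the off-diagonal vertices of row `r`. -/
def cyc (hn : 3 ≤ n) (k : ℕ) : Fin n × Fin n :=
  if k % n = 0 then (gfin n hn (k/n + 1), gfin n hn (k/n + 1))
  else (gfin n hn (k/n), gfin n hn (k/n + 1 + (k % n) % (n-1)))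

lemma succ_div_mod_of_lt (hn : 3 ≤ n) {k : ℕ} (h : k % n + 1 < n) :
    (k+1) % n = k % n + 1 ∧ (k+1) / n = k / n := by
  have hk : k + 1 = n * (k/n) + (k % n + 1) := by
    rw [← Nat.add_assoc, Nat.div_add_mod]
  constructor
  · rw [hk, Nat.mul_add_mod, Nat.mod_eq_of_lt h]
  · rw [hk, Nat.mul_add_div (by omega), Nat.div_eq_of_lt h, Nat.add_zero]

lemma succ_div_mod_of_eq (hn : 3 ≤ n) {k : ℕ} (h : k % n = n - 1) :
    (k+1) % n = 0 ∧ (k+1) / n = k / n + 1 := by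
  have hk : k + 1 = n * (k/n + 1) := by
    have := Nat.div_add_mod k n
    rw [Nat.mul_add, Nat.mul_one]
    omega
  constructor
  · rw [hk, Nat.mul_mod_right]
  · rw [hk, Nat.mul_div_cancel_left _ (show 0 < n by omega)]

lemma brandt_adj_of {x y : Fin n × Fin n} (h1 : x.1 ≠ y.1 ∨ x.2 ≠ y.2)
    (h2 : x.2 ≠ y.1) (h3 : y.2 ≠ x.1) : (brandtGraph n).Adj x y := by
  refine ⟨fun he => ?_, ?_⟩
  · subst he; rcases h1 with h | h <;> exact h rfl
  · show brandtMul x y = brandtMul y x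
    rw [brandtMul, brandtMul, if_neg h2, if_neg h3]

lemma cyc_adj (hn : 3 ≤ n) (k : ℕ) :
    (brandtGraph n).Adj (cyc n hn k) (cyc n hn (k+1)) := by
  have hmod : k % n < n := Nat.mod_lt _ (by omega)
  by_cases h0 : k % n = 0
  · -- from diagonal (r+1,r+1) to (r, r+2)
    obtain ⟨e1, e2⟩ := succ_div_mod_of_lt n hn (k := k) (by omega)
    rw [cyc, cyc, if_pos h0, e1, e2, if_neg (show ¬(k % n + 1 = 0) from by omega), h0]
    rw [show (0 + 1) % (n-1) = 1 from by
      rw [Nat.zero_add]; exact Nat.mod_eq_of_lt (by omega)]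
    refine brandt_adj_of n (Or.inl ?_) ?_ ?_
    · exact (gfin_ne n hn (a := k/n) (b := k/n + 1) (by omega) (by omega)).symm
    · exact (gfin_ne n hn (a := k/n) (b := k/n + 1) (by omega) (by omega)).symm
    · exact (gfin_ne n hn (a := k/n + 1) (b := k/n + 1 + 1) (by omega) (by omega)).symm
  · by_cases hl : k % n = n - 1
    · -- from (r, r+1) to diagonal (r+2, r+2)
      obtain ⟨e1, e2⟩ := succ_div_mod_of_eq n hn hl
      rw [cyc, cyc, if_neg h0, if_pos e1, e2, hl, Nat.mod_self, Nat.add_zero]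
      refine brandt_adj_of n (Or.inl ?_) ?_ ?_
      · exact gfin_ne n hn (a := k/n) (b := k/n + 1 + 1) (by omega) (by omega)
      · exact gfin_ne n hn (a := k/n + 1) (b := k/n + 1 + 1) (by omega) (by omega)
      · exact (gfin_ne n hn (a := k/n) (b := k/n + 1 + 1) (by omega) (by omega)).symm
    · -- within a row
      obtain ⟨e1, e2⟩ := succ_div_mod_of_lt n hn (k := k) (by omega)
      rw [cyc, cyc, if_neg h0, e1, e2, if_neg (show ¬(k % n + 1 = 0) from by omega)]
      rw [Nat.mod_eq_of_lt (show k % n < n - 1 by omega)]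
      by_cases hl2 : k % n + 1 = n - 1
      · rw [hl2, Nat.mod_self, Nat.add_zero]
        refine brandt_adj_of n (Or.inr ?_) ?_ ?_
        · exact (gfin_ne n hn (a := k/n + 1) (b := k/n + 1 + k % n)
            (by omega) (by omega)).symm
        · exact (gfin_ne n hn (a := k/n) (b := k/n + 1 + k % n)
            (by omega) (by omega)).symm
        · exact (gfin_ne n hn (a := k/n) (b := k/n + 1) (by omega) (by omega)).symm
      · rw [Nat.mod_eq_of_lt (show k % n + 1 < n - 1 by omega)]
        refine brandt_adj_of n (Or.inr ?_) ?_ ?_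
        · exact gfin_ne n hn (a := k/n + 1 + k % n) (b := k/n + 1 + (k % n + 1))
            (by omega) (by omega)
        · exact (gfin_ne n hn (a := k/n) (b := k/n + 1 + k % n)
            (by omega) (by omega)).symm
        · exact (gfin_ne n hn (a := k/n) (b := k/n + 1 + (k % n + 1))
            (by omega) (by omega)).symm

lemma cyc_period (hn : 3 ≤ n) : cyc n hn (n*n) = cyc n hn 0 := by
  have h1 : (n*n) % n = 0 := Nat.mul_mod_right n n
  have h2 : (n*n) / n = n := Nat.mul_div_cancel_left _ (show 0 < n by omega)
  have h3 : gfin n hn (n + 1) = gfin n hn 1 := by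
    rw [gfin_eq_iff]; exact Nat.add_mod_left n 1
  rw [cyc, cyc, if_pos h1, if_pos (by norm_num), h2]
  norm_num [h3]

lemma mod_pred_cases (hn : 3 ≤ n) {u : ℕ} (h1 : 0 < u) (h2 : u < n) :
    (u % (n-1) = u ∧ u < n-1) ∨ (u % (n-1) = 0 ∧ u = n-1) := by
  by_cases h : u < n - 1
  · exact Or.inl ⟨Nat.mod_eq_of_lt h, h⟩
  · have : u = n - 1 := by omega
    exact Or.inr ⟨by rw [this, Nat.mod_self], this⟩

lemma cyc_inj (hn : 3 ≤ n) {i j : ℕ} (hi : i < n*n) (hj : j < n*n)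
    (h : cyc n hn i = cyc n hn j) : i = j := by
  have hdi : n * (i/n) + i % n = i := Nat.div_add_mod i n
  have hdj : n * (j/n) + j % n = j := Nat.div_add_mod j n
  have hri : i / n < n := by
    rw [Nat.div_lt_iff_lt_mul (by omega)]; omega
  have hrj : j / n < n := by
    rw [Nat.div_lt_iff_lt_mul (by omega)]; omega
  have hmi : i % n < n := Nat.mod_lt _ (by omega)
  have hmj : j % n < n := Nat.mod_lt _ (by omega)
  rw [cyc, cyc] at h
  obtain ⟨ri, hri0⟩ : ∃ r, i / n = r := ⟨_, rfl⟩
  obtain ⟨rj, hrj0⟩ : ∃ r, j / n = r := ⟨_, rfl⟩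
  obtain ⟨ti, hti0⟩ : ∃ t, i % n = t := ⟨_, rfl⟩
  obtain ⟨tj, htj0⟩ : ∃ t, j % n = t := ⟨_, rfl⟩
  rw [hri0, hti0] at hdi
  rw [hrj0, htj0] at hdj
  rw [hti0] at hmi
  rw [htj0] at hmj
  rw [hri0, hti0, hrj0, htj0] at h
  rw [hri0] at hri
  rw [hrj0] at hrj
  obtain ⟨si, hsi0⟩ : ∃ s, ti % (n-1) = s := ⟨_, rfl⟩
  obtain ⟨sj, hsj0⟩ : ∃ s, tj % (n-1) = s := ⟨_, rfl⟩
  rw [hsi0, hsj0] at h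
  have hsi : si < n - 1 := by rw [← hsi0]; exact Nat.mod_lt _ (by omega)
  have hsj : sj < n - 1 := by rw [← hsj0]; exact Nat.mod_lt _ (by omega)
  by_cases h0i : ti = 0 <;> by_cases h0j : tj = 0
  · rw [if_pos h0i, if_pos h0j, Prod.mk.injEq] at h
    have := nat_mod_inj n hn (a := ri + 1) (b := rj + 1)
      ((gfin_eq_iff n hn).mp h.1) (by omega) (by omega)
    have hr : ri = rj := by omega
    subst hr
    omega
  · rw [if_pos h0i, if_neg h0j, Prod.mk.injEq] at h
    have heq : gfin n hn rj = gfin n hn (rj + 1 + sj) := h.1.symm.trans h.2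
    exact absurd ((gfin_eq_iff n hn).mp heq).symm
      (nat_mod_ne n hn (a := rj) (b := rj + 1 + sj) (by omega) (by omega))
  · rw [if_neg h0i, if_pos h0j, Prod.mk.injEq] at h
    have heq : gfin n hn ri = gfin n hn (ri + 1 + si) := h.1.trans h.2.symm
    exact absurd ((gfin_eq_iff n hn).mp heq).symm
      (nat_mod_ne n hn (a := ri) (b := ri + 1 + si) (by omega) (by omega))
  · rw [if_neg h0i, if_neg h0j, Prod.mk.injEq] at h
    have hr : ri = rj := nat_mod_inj n hn (a := ri) (b := rj)
      ((gfin_eq_iff n hn).mp h.1) (by omega) (by omega)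
    subst hr
    have hs : si = sj := by
      have := nat_mod_inj n hn (a := ri + 1 + si) (b := ri + 1 + sj)
        ((gfin_eq_iff n hn).mp h.2) (by omega) (by omega)
      omega
    have ht : ti = tj := by
      rcases mod_pred_cases n hn (u := ti) (by omega) (by omega) with ⟨e1, e2⟩ | ⟨e1, e2⟩ <;>
        rcases mod_pred_cases n hn (u := tj) (by omega) (by omega) with ⟨f1, f2⟩ | ⟨f1, f2⟩ <;>
        rw [hsi0] at e1 <;> rw [hsj0] at f1 <;> omega
    omega

lemma cyc_surj (hn : 3 ≤ n) (a : Fin n × Fin n) : ∃ k < n*n, cyc n hn k = a := by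
  let F : Fin (n*n) → Fin n × Fin n := fun i => cyc n hn i
  have hinj : Function.Injective F := fun i j h =>
    Fin.ext (cyc_inj n hn i.2 j.2 h)
  have hbij : Function.Bijective F :=
    (Fintype.bijective_iff_injective_and_card F).mpr ⟨hinj, by simp⟩
  obtain ⟨i, hi⟩ := hbij.2 a
  exact ⟨i, i.2, hi⟩

end BrandtHam

open BrandtHam SimpleGraph

theorem brandt_hamiltonian (n : ℕ) (hn : 3 ≤ n) :
    (brandtGraph n).IsHamiltonian := by
  intro _hcard
  have hN9 : 9 ≤ n * n := by
    calc 9 = 3 * 3 := rfl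
    _ ≤ n * n := Nat.mul_le_mul hn hn
  set v : ℕ → Fin n × Fin n := cyc n hn with hv
  have hadj : ∀ k, (brandtGraph n).Adj (v k) (v (k+1)) := cyc_adj n hn
  have hper : v (n*n) = v 0 := cyc_period n hn
  -- injectivity helper for indices in [1, n*n]
  have hinj : ∀ i j : ℕ, 0 < i → i ≤ n*n → 0 < j → j ≤ n*n → v i = v j → i = j := by
    intro i j hi0 hi hj0 hj h
    rcases eq_or_lt_of_le hi with rfl | hi' <;> rcases eq_or_lt_of_le hj with hj' | hj'
    · omega
    · rw [hper] at h
      have := cyc_inj n hn (show 0 < n*n by omega) hj' h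
      omega
    · rw [hj', hper] at h
      have := cyc_inj n hn hi' (show 0 < n*n by omega) h
      omega
    · exact cyc_inj n hn hi' hj' h
  set N := n * n with hN
  -- the walk from v 1 back to v 0 through all remaining vertices
  let q : (brandtGraph n).Walk (v 1) (v 0) :=
    (chainWalk v hadj (N-1) 1).copy rfl
      (by rw [show 1 + (N-1) = N from by omega]; exact hper)
  let p : (brandtGraph n).Walk (v 0) (v 0) := Walk.cons (hadj 0) q
  refine ⟨v 0, p, ?_⟩
  have hqs : q.support = (List.range N).map (fun i => v (1+i)) := by
    show ((chainWalk v hadj (N-1) 1).copy rfl _).support = _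
    rw [Walk.support_copy, chainWalk_support v hadj (N-1) 1,
      show N - 1 + 1 = N from by omega]
  have hnd : q.support.Nodup := by
    rw [hqs]
    refine List.Nodup.map_on ?_ (List.nodup_range (n := N))
    intro x hx y hy hxy
    rw [List.mem_range] at hx hy
    have := hinj (1+x) (1+y) (by omega) (by omega) (by omega) (by omega) hxy
    omega
  have hpath : q.IsPath := Walk.IsPath.mk' hnd
  have hqe : q.edges = (List.range (N-1)).map (fun i => s(v (1+i), v (1+i+1))) := by
    show ((chainWalk v hadj (N-1) 1).copy rfl _).edges = _
    rw [Walk.edges_copy, chainWalk_edges v hadj (N-1) 1]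
  have hnotmem : s(v 0, v 1) ∉ q.edges := by
    rw [hqe]
    intro hmem
    rw [List.mem_map] at hmem
    obtain ⟨i, hi, he⟩ := hmem
    rw [List.mem_range] at hi
    rw [Sym2.eq_iff] at he
    rcases he with ⟨h1, h2⟩ | ⟨h1, h2⟩
    · have : (1+i) = N := hinj (1+i) N (by omega) (by omega) (by omega) le_rfl
        (h1.trans hper.symm)
      omega
    · have e1 : (1+i) = 1 := hinj (1+i) 1 (by omega) (by omega) (by omega) (by omega) h1
      have e2 : (1+i+1) = N := hinj (1+i+1) N (by omega) (by omega) (by omega) le_rfl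
        (h2.trans hper.symm)
      omega
  have hcyc : p.IsCycle := (Walk.cons_isCycle_iff q (hadj 0)).mpr ⟨hpath, hnotmem⟩
  refine Walk.isHamiltonianCycle_isCycle_and_isHamiltonian_tail.mpr ⟨hcyc, ?_⟩
  intro a
  have hnil : ¬ p.Nil := hcyc.not_nil
  rw [Walk.support_tail_of_not_nil p hnil]
  have hps : p.support = v 0 :: q.support := Walk.support_cons _ _
  rw [hps, List.tail_cons]
  obtain ⟨k, hk, hka⟩ := cyc_surj n hn a
  have hmem : a ∈ q.support := by
    rw [hqs, List.mem_map]
    rcases Nat.eq_zero_or_pos k with rfl | hk0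
    · exact ⟨N-1, List.mem_range.mpr (by omega),
        by rw [show 1 + (N-1) = N from by omega, hper]; exact hka⟩
    · exact ⟨k-1, List.mem_range.mpr (by omega),
        by rw [show 1 + (k-1) = k from by omega]; exact hka⟩
  convert List.count_eq_one_of_mem hnd hmem using 2
  exact lawful_beq_subsingleton _ _
end

section
/- For n ≥ 2, the dominance number of the commuting graph Δ(B_n) is 3: there is a dominating set of size 3, and no dominating set of size 2 or 1 exists. -/
lemma brandt_not_adj_left {n : ℕ} {x y : Fin n × Fin n} (h : x.2 = y.1) :
    ¬ (brandtGraph n).Adj x y := by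
  rintro ⟨hne, hmul⟩
  unfold brandtMul at hmul
  rw [if_pos h] at hmul
  split_ifs at hmul with h2
  · rw [Option.some_inj, Prod.ext_iff] at hmul
    exact hne (Prod.ext hmul.1 hmul.2.symm)

lemma brandt_not_adj_right {n : ℕ} {x y : Fin n × Fin n} (h : y.2 = x.1) :
    ¬ (brandtGraph n).Adj x y :=
  fun ha => brandt_not_adj_left h ha.symm

lemma brandt_adj_of {n : ℕ} {x y : Fin n × Fin n} (hne : x ≠ y)
    (h1 : x.2 ≠ y.1) (h2 : y.2 ≠ x.1) : (brandtGraph n).Adj x y :=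
  ⟨hne, by unfold brandtMul; rw [if_neg h1, if_neg h2]⟩

lemma brandt_exists_undominated {n : ℕ} (hn : 2 ≤ n) (d1 d2 : Fin n × Fin n) :
    ∃ v, v ≠ d1 ∧ v ≠ d2 ∧ ¬(brandtGraph n).Adj v d1 ∧ ¬(brandtGraph n).Adj v d2 := by
  haveI : Nontrivial (Fin n) := Fin.nontrivial_iff_two_le.mpr hn
  obtain ⟨a, b⟩ := d1
  obtain ⟨c, d⟩ := d2
  by_cases h1 : (d, a) = (a, b)
  · -- d = a and a = b
    obtain ⟨hda, hab⟩ := Prod.mk.injEq .. ▸ h1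
    obtain ⟨e, he⟩ := exists_ne a
    refine ⟨(a, e), ?_, ?_, ?_, ?_⟩
    · intro h; rw [Prod.mk.injEq] at h; exact he (h.2.trans hab.symm)
    · intro h; rw [Prod.mk.injEq] at h; exact he (h.2.trans hda)
    · exact brandt_not_adj_right (show b = a from hab.symm)
    · exact brandt_not_adj_right (show d = a from hda)
  · by_cases h2 : (d, a) = (c, d)
    · -- d = c and a = d
      obtain ⟨hdc, had⟩ := Prod.mk.injEq .. ▸ h2
      obtain ⟨e, he⟩ := exists_ne a
      refine ⟨(e, a), ?_, ?_, ?_, ?_⟩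
      · intro h; rw [Prod.mk.injEq] at h; exact he h.1
      · intro h; rw [Prod.mk.injEq] at h
        exact he (h.1.trans (hdc.symm.trans had.symm))
      · exact brandt_not_adj_left rfl
      · exact brandt_not_adj_left (show a = c from had ▸ hdc)
    · exact ⟨(d, a), h1, h2, brandt_not_adj_left rfl, brandt_not_adj_right rfl⟩

theorem brandt_domination_number (n : ℕ) (hn : 2 ≤ n) :
    (∃ D : Set (Fin n × Fin n), D.ncard = 3 ∧
      ∀ v ∉ D, ∃ d ∈ D, (brandtGraph n).Adj v d) ∧
    ∀ D : Set (Fin n × Fin n),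
      (∀ v ∉ D, ∃ d ∈ D, (brandtGraph n).Adj v d) → 3 ≤ D.ncard := by
  set z : Fin n := ⟨0, by omega⟩ with hz
  set o : Fin n := ⟨1, by omega⟩ with ho
  have hzo : z ≠ o := by
    intro h; rw [Fin.ext_iff] at h; simp [hz, ho] at h
  constructor
  · refine ⟨{(z, z), (z, o), (o, z)}, ?_, ?_⟩
    · refine Set.ncard_eq_three.mpr ⟨(z, z), (z, o), (o, z), ?_, ?_, ?_, rfl⟩
      · intro h; rw [Prod.mk.injEq] at h; exact hzo h.2
      · intro h; rw [Prod.mk.injEq] at h; exact hzo h.1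
      · intro h; rw [Prod.mk.injEq] at h; exact hzo h.2.symm
    · intro v hv
      simp only [Set.mem_insert_iff, Set.mem_singleton_iff, not_or] at hv
      obtain ⟨hv1, hv2, hv3⟩ := hv
      by_cases hj : v.2 = z
      · refine ⟨(o, z), by simp, brandt_adj_of hv3 ?_ ?_⟩
        · rw [hj]; exact hzo
        · intro h
          exact hv1 (Prod.ext h.symm hj)
      · by_cases hi : v.1 = o
        · refine ⟨(z, z), by simp, brandt_adj_of ?_ hj ?_⟩
          · intro h; rw [h] at hi; exact hzo hi
          · intro h; rw [hi] at h; exact hzo h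
        · exact ⟨(z, o), by simp, brandt_adj_of hv2 hj fun h => hi h.symm⟩
  · intro D hdom
    by_contra h
    push_neg at h
    have hsub : ∃ d1 d2, D ⊆ {d1, d2} := by
      by_contra hsub
      push_neg at hsub
      simp only [Set.not_subset] at hsub
      obtain ⟨x1, hx1, _⟩ := hsub (z, z) (z, z)
      obtain ⟨x2, hx2, hx2'⟩ := hsub x1 x1
      obtain ⟨x3, hx3, hx3'⟩ := hsub x1 x2
      simp only [Set.mem_insert_iff, Set.mem_singleton_iff, not_or] at hx2' hx3'
      have hle : ({x1, x2, x3} : Set (Fin n × Fin n)).ncard ≤ D.ncard :=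
        Set.ncard_le_ncard (by
          intro x hx
          simp only [Set.mem_insert_iff, Set.mem_singleton_iff] at hx
          rcases hx with rfl | rfl | rfl <;> assumption) (Set.toFinite D)
      have h3 : ({x1, x2, x3} : Set (Fin n × Fin n)).ncard = 3 :=
        Set.ncard_eq_three.mpr ⟨x1, x2, x3, fun hh => hx2'.1 (hh.symm ▸ rfl),
          fun hh => hx3'.1 (hh.symm ▸ rfl), fun hh => hx3'.2 (hh.symm ▸ rfl), rfl⟩
      omega
    obtain ⟨d1, d2, hD⟩ := hsub
    obtain ⟨v, hv1, hv2, hna1, hna2⟩ := brandt_exists_undominated hn d1 d2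
    have hvD : v ∉ D := fun hv => by
      rcases hD hv with h | h
      · exact hv1 h
      · exact hv2 h
    obtain ⟨d, hd, hadj⟩ := hdom v hvD
    rcases hD hd with rfl | rfl
    · exact hna1 hadj
    · exact hna2 hadj
end

section
/- For n ≥ 2, if A and B are disjoint nonempty subsets of [n], then A × B is a clique in the commuting graph Δ(B_n) containing no idempotent, i.e., any two distinct elements (a,b), (c,d) with a,c ∈ A and b,d ∈ B commute in B_n. -/
theorem brandt_prod_clique (n : ℕ) (hn : 2 ≤ n) (A B : Set (Fin n))
    (hA : A.Nonempty) (hB : B.Nonempty) (hAB : Disjoint A B) :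
    (brandtGraph n).IsClique (A ×ˢ B) ∧ ∀ p ∈ A ×ˢ B, p.1 ≠ p.2 := by
  have key : ∀ x ∈ A, ∀ y ∈ B, x ≠ y := fun x hx y hy h =>
    hAB.ne_of_mem hx hy h
  constructor
  · intro x hx y hy hxy
    refine ⟨hxy, ?_⟩
    unfold brandtMul
    rw [if_neg (key y.1 hy.1 x.2 hx.2 ∘ Eq.symm), if_neg (key x.1 hx.1 y.2 hy.2 ∘ Eq.symm)]
  · intro p hp
    exact key p.1 hp.1 p.2 hp.2
end

section
/- For n ≥ 2, any clique K in the commuting graph Δ(B_n) containing no idempotent element satisfies |K| ≤ n²/4 if n is even, and |K| ≤ (n² − 1)/4 if n is odd. Equivalently, |K| ≤ ⌊n²/4⌋. -/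
theorem brandt_clique_bound (n : ℕ) (hn : 2 ≤ n) (K : Set (Fin n × Fin n))
    (hK : (brandtGraph n).IsClique K) (hid : ∀ p ∈ K, p.1 ≠ p.2) :
    K.ncard ≤ n ^ 2 / 4 := by
  have hfin : K.Finite := Set.toFinite K
  set F : Finset (Fin n × Fin n) := hfin.toFinset with hF
  have hmemF : ∀ p, p ∈ F ↔ p ∈ K := fun p => hfin.mem_toFinset
  set A : Finset (Fin n) := F.image Prod.fst with hA
  set B : Finset (Fin n) := F.image Prod.snd with hB
  -- key: no second coordinate equals a first coordinate
  have key : ∀ p ∈ K, ∀ q ∈ K, q.2 ≠ p.1 := by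
    intro p hp q hq hqp
    by_cases hpq : p = q
    · subst hpq; exact hid p hp hqp.symm
    · have hadj := hK hp hq hpq
      have hcomm := hadj.2
      unfold brandtMul at hcomm
      rw [if_pos hqp] at hcomm
      by_cases h2 : p.2 = q.1
      · rw [if_pos h2] at hcomm
        simp only [Option.some.injEq, Prod.mk.injEq] at hcomm
        exact hpq (Prod.ext hcomm.1 hcomm.2.symm)
      · rw [if_neg h2] at hcomm
        cases hcomm
  have hdisj : Disjoint A B := by
    rw [Finset.disjoint_left]
    intro x hxA hxB
    rw [hA, Finset.mem_image] at hxA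
    rw [hB, Finset.mem_image] at hxB
    obtain ⟨p, hp, hp1⟩ := hxA
    obtain ⟨q, hq, hq2⟩ := hxB
    exact key p ((hmemF p).mp hp) q ((hmemF q).mp hq) (hq2.trans hp1.symm)
  have hsub : F ⊆ A ×ˢ B := by
    intro p hp
    rw [Finset.mem_product]
    exact ⟨Finset.mem_image_of_mem _ hp, Finset.mem_image_of_mem _ hp⟩
  have hcard : F.card ≤ A.card * B.card := by
    calc F.card ≤ (A ×ˢ B).card := Finset.card_le_card hsub
    _ = A.card * B.card := Finset.card_product A B
  have hsum : A.card + B.card ≤ n := by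
    rw [← Finset.card_union_of_disjoint hdisj]
    simpa using Finset.card_le_univ (A ∪ B)
  have hK' : K.ncard = F.card := Set.ncard_eq_toFinset_card K hfin
  rw [hK']
  refine le_trans hcard ?_
  rw [Nat.le_div_iff_mul_le (by norm_num)]
  nlinarith [hsum, Nat.mul_le_mul hsum hsum, sq_nonneg (A.card - B.card : ℤ)]
end

section
/- For n > 4, the clique number of the commuting graph Δ(B_n) is n²/4 if n is even and (n² − 1)/4 if n is odd; equivalently, ω(Δ(B_n)) = ⌊n²/4⌋. -/
lemma brandt_adj_iff {n : ℕ} {x y : Fin n × Fin n} :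
    (brandtGraph n).Adj x y ↔ x ≠ y ∧ x.2 ≠ y.1 ∧ y.2 ≠ x.1 := by
  show (x ≠ y ∧ brandtMul x y = brandtMul y x) ↔ _
  unfold brandtMul
  by_cases h1 : x.2 = y.1 <;> by_cases h2 : y.2 = x.1
  · simp only [if_pos h1, if_pos h2, Option.some.injEq, Prod.mk.injEq]
    constructor
    · rintro ⟨hne, h3, h4⟩
      exact absurd (Prod.ext h3 (h1.trans (h3.symm.trans h2.symm))) hne
    · rintro ⟨-, h3, -⟩; exact absurd h1 h3
  · simp only [if_pos h1, if_neg h2]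
    constructor
    · rintro ⟨-, h⟩; exact absurd h (by simp)
    · rintro ⟨-, h3, -⟩; exact absurd h1 h3
  · simp only [if_neg h1, if_pos h2]
    constructor
    · rintro ⟨-, h⟩; exact absurd h (by simp)
    · rintro ⟨-, -, h4⟩; exact absurd h2 h4
  · simp only [if_neg h1, if_neg h2]
    exact ⟨fun h => ⟨h.1, h1, h2⟩, fun h => ⟨h.1, trivial⟩⟩

lemma brandt_key_arith (a b d n : ℕ) (hn : 5 ≤ n) (h : d + a + b ≤ n) :
    d + a * b ≤ n ^ 2 / 4 := by
  rw [Nat.le_div_iff_mul_le (by norm_num)]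
  have h1 : (d : ℤ) + a + b ≤ n := by exact_mod_cast h
  have h2 : ((d : ℤ) + a * b) * 4 ≤ (n : ℤ) ^ 2 := by
    nlinarith [sq_nonneg ((a : ℤ) - b), sq_nonneg ((a : ℤ) + b),
      mul_nonneg (mul_nonneg (Int.natCast_nonneg d) (Int.natCast_nonneg a)) (Int.natCast_nonneg b),
      mul_nonneg (Int.natCast_nonneg d) (Int.natCast_nonneg a),
      mul_nonneg (Int.natCast_nonneg d) (Int.natCast_nonneg b),
      mul_nonneg (Int.natCast_nonneg d) (sub_nonneg.mpr h1),
      sq_nonneg ((d : ℤ))]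
  exact_mod_cast h2

theorem brandt_clique_number_large (n : ℕ) (hn : 4 < n) :
    (∃ K : Set (Fin n × Fin n), (brandtGraph n).IsClique K ∧ K.ncard = n ^ 2 / 4) ∧
    ∀ K : Set (Fin n × Fin n), (brandtGraph n).IsClique K → K.ncard ≤ n ^ 2 / 4 := by
  have hn2 : n / 2 < n := Nat.div_lt_self (by omega) (by norm_num)
  constructor
  · -- lower bound: construction
    set m : Fin n := ⟨n / 2, hn2⟩ with hm
    refine ⟨↑((Finset.Iio m) ×ˢ (Finset.Ici m)), ?_, ?_⟩
    · intro x hx y hy hxy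
      simp only [Finset.coe_product, Set.mem_prod, Finset.mem_coe, Finset.mem_Iio,
        Finset.mem_Ici] at hx hy
      rw [brandt_adj_iff]
      refine ⟨hxy, ?_, ?_⟩
      · intro hc
        have h1 : (n : ℕ) / 2 ≤ (x.2 : ℕ) := hx.2
        have h2 : (y.1 : ℕ) < n / 2 := hy.1
        rw [hc] at h1; omega
      · intro hc
        have h1 : (n : ℕ) / 2 ≤ (y.2 : ℕ) := hy.2
        have h2 : (x.1 : ℕ) < n / 2 := hx.1
        rw [hc] at h1; omega
    · rw [Set.ncard_coe_finset, Finset.card_product, Fin.card_Iio, Fin.card_Ici]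
      show n / 2 * (n - n / 2) = n ^ 2 / 4
      rcases Nat.even_or_odd n with ⟨k, hk⟩ | ⟨k, hk⟩
      · subst hk
        have h1 : (k + k) / 2 = k := by omega
        have h2 : (k + k) ^ 2 = k * k * 4 := by ring
        rw [h1, h2, Nat.mul_div_cancel _ (by norm_num)]
        have : k + k - k = k := by omega
        rw [this]
      · subst hk
        have h1 : (2 * k + 1) / 2 = k := by omega
        have h2 : (2 * k + 1) ^ 2 = (k * (k + 1)) * 4 + 1 := by ring
        rw [h1, h2]
        have h3 : (k * (k + 1) * 4 + 1) / 4 = k * (k + 1) := by omega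
        rw [h3]
        have : 2 * k + 1 - k = k + 1 := by omega
        rw [this]
  · -- upper bound
    intro K hK
    classical
    have hKf : K.Finite := Set.toFinite K
    set F : Finset (Fin n × Fin n) := hKf.toFinset with hF
    have hmemF : ∀ p, p ∈ F ↔ p ∈ K := fun p => Set.Finite.mem_toFinset hKf
    have hadj : ∀ x ∈ F, ∀ y ∈ F, x ≠ y → x.2 ≠ y.1 ∧ y.2 ≠ x.1 := by
      intro x hx y hy hxy
      have := hK ((hmemF x).mp hx) ((hmemF y).mp hy) hxy
      rw [brandt_adj_iff] at this
      exact this.2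
    set Fd : Finset (Fin n × Fin n) := F.filter (fun p => p.1 = p.2) with hFd
    set Fo : Finset (Fin n × Fin n) := F.filter (fun p => ¬ p.1 = p.2) with hFo
    set A : Finset (Fin n) := Fo.image Prod.fst with hA
    set B : Finset (Fin n) := Fo.image Prod.snd with hB
    set D : Finset (Fin n) := Fd.image Prod.fst with hD
    -- |Fd| = |D|
    have hcardD : Fd.card = D.card := by
      rw [hD, Finset.card_image_of_injOn]
      intro p hp q hq hpq
      simp only [hFd, Finset.coe_filter, Set.mem_setOf_eq] at hp hq
      exact Prod.ext hpq (by rw [← hp.2, ← hq.2, hpq])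
    -- |Fo| ≤ |A| * |B|
    have hcardO : Fo.card ≤ A.card * B.card := by
      have hsub : Fo ⊆ A ×ˢ B := by
        intro p hp
        rw [Finset.mem_product]
        exact ⟨Finset.mem_image_of_mem _ hp, Finset.mem_image_of_mem _ hp⟩
      calc Fo.card ≤ (A ×ˢ B).card := Finset.card_le_card hsub
        _ = A.card * B.card := Finset.card_product A B
    -- disjointness
    have hAB : Disjoint A B := by
      rw [Finset.disjoint_left]
      intro v hvA hvB
      obtain ⟨x, hx, hx1⟩ := Finset.mem_image.mp hvA
      obtain ⟨y, hy, hy2⟩ := Finset.mem_image.mp hvB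
      simp only [hFo, Finset.mem_filter] at hx hy
      by_cases hxy : y = x
      · subst hxy
        exact hx.2 (hx1 ▸ hy2 ▸ rfl)
      · exact (hadj y hy.1 x hx.1 hxy).1 (hy2.trans hx1.symm)
    have hDA : Disjoint D A := by
      rw [Finset.disjoint_left]
      intro v hvD hvA
      obtain ⟨p, hp, hp1⟩ := Finset.mem_image.mp hvD
      obtain ⟨x, hx, hx1⟩ := Finset.mem_image.mp hvA
      simp only [hFd, Finset.mem_filter] at hp
      simp only [hFo, Finset.mem_filter] at hx
      have hpx : p ≠ x := fun h => hx.2 (by rw [← h]; exact hp.2)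
      have := (hadj p hp.1 x hx.1 hpx).1
      exact this (by rw [← hp.2, hp1, hx1])
    have hDB : Disjoint D B := by
      rw [Finset.disjoint_left]
      intro v hvD hvB
      obtain ⟨p, hp, hp1⟩ := Finset.mem_image.mp hvD
      obtain ⟨y, hy, hy2⟩ := Finset.mem_image.mp hvB
      simp only [hFd, Finset.mem_filter] at hp
      simp only [hFo, Finset.mem_filter] at hy
      have hpy : y ≠ p := fun h => hy.2 (by rw [h]; exact hp.2)
      have := (hadj y hy.1 p hp.1 hpy).1
      exact this (by rw [hy2, hp1])
    -- |D| + |A| + |B| ≤ n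
    have hsum : D.card + A.card + B.card ≤ n := by
      have h1 : Disjoint D (A ∪ B) := by
        rw [Finset.disjoint_union_right]; exact ⟨hDA, hDB⟩
      have h2 : (D ∪ (A ∪ B)).card = D.card + A.card + B.card := by
        rw [Finset.card_union_of_disjoint h1, Finset.card_union_of_disjoint hAB, add_assoc]
      calc D.card + A.card + B.card = (D ∪ (A ∪ B)).card := h2.symm
        _ ≤ (Finset.univ : Finset (Fin n)).card := Finset.card_le_univ _
        _ = n := Finset.card_fin n
    -- conclusion
    have hsplit : F.card = Fd.card + Fo.card :=
      (Finset.card_filter_add_card_filter_not (p := fun p : Fin n × Fin n => p.1 = p.2)).symm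
    have : K.ncard = F.card := Set.ncard_eq_toFinset_card K hKf
    rw [this, hsplit, hcardD]
    calc D.card + Fo.card ≤ D.card + A.card * B.card := by omega
      _ ≤ n ^ 2 / 4 := brandt_key_arith A.card B.card D.card n (by omega) hsum
end
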